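/- Let β > 0, let v_1,…,v_N > 0 and ρ_1,…,ρ_N ∈ [0,1], and define f(η) = Σ_{i=1}^{N} v_i h(ρ_i,β,η) − Σ_{i=1}^{N} v_i ρ_i. If at least one ρ_i lies in the open interval (0,1), then f(0) > 0. -/

import Mathlib

/-- The tanh-based Heaviside projection. -/
noncomputable def heavisideProj (ρ β η : ℝ) : ℝ :=
  (Real.tanh (β * η) + Real.tanh (β * (ρ - η))) /
    (Real.tanh (β * η) + Real.tanh (β * (1 - η)))

lemma real_tanh_pos {x : ℝ} (hx : 0 < x) : 0 < Real.tanh x := by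
  rw [Real.tanh_eq_sinh_div_cosh]
  exact div_pos (Real.sinh_pos_iff.2 hx) (Real.cosh_pos x)

lemma hasDerivAt_tanh (x : ℝ) : HasDerivAt Real.tanh (1 / Real.cosh x ^ 2) x := by
  have h : HasDerivAt (Real.sinh / Real.cosh) _ x := (Real.hasDerivAt_sinh x).div (Real.hasDerivAt_cosh x) (Real.cosh_pos x).ne'
  have hfun : (Real.sinh / Real.cosh) = Real.tanh := by
    funext y; rw [Pi.div_apply, Real.tanh_eq_sinh_div_cosh]
  rw [hfun] at h
  convert h using 1
  have := Real.cosh_sq_sub_sinh_sq x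
  field_simp
  ring_nf
  nlinarith [this]

lemma hasDerivAt_g (β x : ℝ) :
    HasDerivAt (fun t => Real.tanh (β * t)) (β / Real.cosh (β * x) ^ 2) x := by
  have h : HasDerivAt (fun t => Real.tanh (β * t)) _ x := (hasDerivAt_tanh (β * x)).comp x ((hasDerivAt_id x).const_mul β)
  convert h using 1
  simp [mul_comm]
  ring

lemma continuous_g (β : ℝ) : Continuous (fun t => Real.tanh (β * t)) := by
  have : Continuous Real.tanh := by
    have : Real.tanh = fun y => Real.sinh y / Real.cosh y := by
      funext y; rw [Real.tanh_eq_sinh_div_cosh]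
    rw [this]
    exact Real.continuous_sinh.div Real.continuous_cosh fun x => (Real.cosh_pos x).ne'
  exact this.comp (continuous_const.mul continuous_id)

lemma strictConcave_g {β : ℝ} (hβ : 0 < β) :
    StrictConcaveOn ℝ (Set.Icc (0:ℝ) 1) (fun t => Real.tanh (β * t)) := by
  apply strictConcaveOn_of_deriv2_neg (convex_Icc 0 1) (continuous_g β).continuousOn
  intro x hx
  rw [interior_Icc] at hx
  have hd1 : deriv (fun t => Real.tanh (β * t)) = fun t => β * (Real.cosh (β * t) ^ 2)⁻¹ := by
    funext t
    rw [(hasDerivAt_g β t).deriv, div_eq_mul_inv]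
  have hd2 : HasDerivAt (fun t => β * (Real.cosh (β * t) ^ 2)⁻¹)
      (β * (-(2 * Real.cosh (β * x) * (Real.sinh (β * x) * β)) / (Real.cosh (β * x) ^ 2) ^ 2))
      x := by
    have hc : HasDerivAt (fun t => Real.cosh (β * t)) (Real.sinh (β * x) * β) x := by
      have : HasDerivAt (fun t => Real.cosh (β * t)) _ x := (Real.hasDerivAt_cosh (β * x)).comp x ((hasDerivAt_id x).const_mul β)
      convert this using 1; simp [mul_comm]
    have hsq : HasDerivAt (fun t => Real.cosh (β * t) ^ 2)
        (2 * Real.cosh (β * x) * (Real.sinh (β * x) * β)) x := by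
      have : HasDerivAt (fun t => Real.cosh (β * t) ^ 2) _ x := hc.pow 2
      convert this using 1; ring
    have hinv := hsq.inv (pow_ne_zero 2 (Real.cosh_pos _).ne')
    exact hinv.const_mul β
  show deriv^[2] (fun t => Real.tanh (β * t)) x < 0
  rw [Function.iterate_succ, Function.iterate_one, Function.comp_apply, hd1, hd2.deriv]
  have hs : 0 < Real.sinh (β * x) := Real.sinh_pos_iff.2 (mul_pos hβ hx.1)
  have hc : 0 < Real.cosh (β * x) := Real.cosh_pos _
  apply mul_neg_of_pos_of_neg hβ
  apply div_neg_of_neg_of_pos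
  · have : 0 < 2 * Real.cosh (β * x) * (Real.sinh (β * x) * β) := by positivity
    linarith
  · positivity

lemma tanh_mul_ge {β t : ℝ} (hβ : 0 < β) (ht : t ∈ Set.Icc (0:ℝ) 1) :
    t * Real.tanh β ≤ Real.tanh (β * t) := by
  rcases eq_or_lt_of_le ht.1 with h0 | h0
  · simp [← h0]
  rcases eq_or_lt_of_le ht.2 with h1 | h1
  · simp [h1]
  have key := (strictConcave_g hβ).2
    (Set.mem_Icc.2 ⟨le_refl (0:ℝ), zero_le_one⟩) (Set.mem_Icc.2 ⟨zero_le_one, le_refl (1:ℝ)⟩)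
    (by norm_num) (show (0:ℝ) < 1 - t by linarith) h0 (by ring)
  simp only [smul_eq_mul, mul_zero, mul_one, zero_add, Real.tanh_zero] at key
  linarith [key]

lemma tanh_mul_gt {β t : ℝ} (hβ : 0 < β) (ht : t ∈ Set.Ioo (0:ℝ) 1) :
    t * Real.tanh β < Real.tanh (β * t) := by
  have key := (strictConcave_g hβ).2
    (Set.mem_Icc.2 ⟨le_refl (0:ℝ), zero_le_one⟩) (Set.mem_Icc.2 ⟨zero_le_one, le_refl (1:ℝ)⟩)
    (by norm_num) (show (0:ℝ) < 1 - t by linarith [ht.2]) ht.1 (by ring)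
  simp only [smul_eq_mul, mul_zero, mul_one, zero_add, Real.tanh_zero] at key
  linarith [key]

theorem volume_function_pos_at_zero (N : ℕ) (β : ℝ) (hβ : 0 < β)
    (v ρ : Fin N → ℝ) (hv : ∀ i, 0 < v i) (hρ : ∀ i, ρ i ∈ Set.Icc (0:ℝ) 1)
    (f : ℝ → ℝ)
    (hf : ∀ η, f η = (∑ i, v i * heavisideProj (ρ i) β η) - ∑ i, v i * ρ i)
    (hmid : ∃ i, ρ i ∈ Set.Ioo (0:ℝ) 1) :
    0 < f 0 := by
  obtain ⟨i₀, hi₀⟩ := hmid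
  have htβ : 0 < Real.tanh β := real_tanh_pos hβ
  have hproj : ∀ r : ℝ, heavisideProj r β 0 = Real.tanh (β * r) / Real.tanh β := by
    intro r
    simp [heavisideProj]
  rw [hf, sub_pos]
  apply Finset.sum_lt_sum
  · intro i _
    rw [hproj]
    have := tanh_mul_ge hβ (hρ i)
    have h1 : ρ i ≤ Real.tanh (β * ρ i) / Real.tanh β := (le_div_iff₀ htβ).2 this
    exact mul_le_mul_of_nonneg_left h1 (hv i).le
  · refine ⟨i₀, Finset.mem_univ i₀, ?_⟩
    rw [hproj]
    have := tanh_mul_gt hβ hi₀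
    have h1 : ρ i₀ < Real.tanh (β * ρ i₀) / Real.tanh β := (lt_div_iff₀ htβ).2 this
    exact mul_lt_mul_of_pos_left h1 (hv i₀)
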